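/- Let K be a real Hilbert space, ξ ∈ K, and F an ℝⁿ-valued Fréchet-C¹ map defined on a neighborhood of ξ with bounded derivative DF, such that DF(ξ): K → ℝⁿ is surjective. Let L be a real Banach space continuously and densely embedded in K. Then there exists a sequence ξ_j ∈ L (j = 1,2,…) with ‖ξ_j − ξ‖_K → 0 and F(ξ_j) = F(ξ) for all j. -/

import Mathlib

open Filter

/-- Lemma 3.2 (lm.inver): let `K` be a real Hilbert space, `ξ ∈ K`, and
`F : K → ℝⁿ` Fréchet-`C¹` on a neighborhood `U` of `ξ` with bounded derivative,
with `DF(ξ)` surjective. If `L` is a real Banach space continuously and densely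
embedded in `K` (via `e`), then there is a sequence `ξ_j ∈ L` with
`‖e ξ_j − ξ‖_K → 0` and `F(e ξ_j) = F(ξ)` for all `j`. -/
theorem exists_seq_in_dense_subspace_with_same_value
    {K : Type*} [NormedAddCommGroup K] [InnerProductSpace ℝ K] [CompleteSpace K]
    {L : Type*} [NormedAddCommGroup L] [NormedSpace ℝ L] [CompleteSpace L]
    (e : L →L[ℝ] K) (he : DenseRange e)
    (n : ℕ) (F : K → EuclideanSpace ℝ (Fin n))
    (F' : K → K →L[ℝ] EuclideanSpace ℝ (Fin n))
    (ξ : K) (U : Set K) (hU : IsOpen U) (hξU : ξ ∈ U)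
    (hF : ∀ x ∈ U, HasFDerivAt F (F' x) x)
    (hF'cont : ContinuousOn F' U)
    (hF'bdd : ∃ C, ∀ x ∈ U, ‖F' x‖ ≤ C)
    (hsurj : Function.Surjective (F' ξ)) :
    ∃ ξj : ℕ → L,
      Tendsto (fun j => ‖e (ξj j) - ξ‖) atTop (nhds 0) ∧ ∀ j, F (e (ξj j)) = F ξ := by
  classical
  obtain ⟨C₀, hC₀⟩ := hF'bdd
  obtain ⟨C', hC'pos, hC'⟩ : ∃ C' : ℝ, 0 < C' ∧ ∀ x ∈ U, ‖F' x‖ ≤ C' :=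
    ⟨max C₀ 1, lt_of_lt_of_le one_pos (le_max_right _ _),
      fun x hx => (hC₀ x hx).trans (le_max_left _ _)⟩
  -- the composed linear map `A = F'(ξ) ∘ e : L → ℝⁿ` is surjective
  have hAdense : DenseRange (⇑((F' ξ).comp e)) := by
    have h1 : DenseRange (⇑(F' ξ)) := hsurj.denseRange
    have h2 : DenseRange ((F' ξ) ∘ ⇑e) := h1.comp he (F' ξ).continuous
    exact h2
  have hArange : ((F' ξ).comp e).range = ⊤ := by
    have hclosed : IsClosed ((((F' ξ).comp e).range : Submodule ℝ _) :
        Set (EuclideanSpace ℝ (Fin n))) :=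
      (((F' ξ).comp e).range).closed_of_finiteDimensional
    have hset : ((((F' ξ).comp e).range : Submodule ℝ _) :
        Set (EuclideanSpace ℝ (Fin n))) = Set.range ⇑((F' ξ).comp e) := by
      ext y; simp [LinearMap.mem_range]
    have huniv : ((((F' ξ).comp e).range : Submodule ℝ _) :
        Set (EuclideanSpace ℝ (Fin n))) = Set.univ := by
      rw [← hclosed.closure_eq, hset]
      exact hAdense.closure_eq
    exact SetLike.coe_injective (by simpa using huniv)
  -- nonlinear right inverse
  obtain ⟨Asymm, hM⟩ := ((F' ξ).comp e).exists_nonlinearRightInverse_of_surjective hArange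
  have hMpos : (0:ℝ) < (Asymm.nnnorm : ℝ) := by exact_mod_cast hM
  obtain ⟨m, hmpos, hmdef⟩ : ∃ m : ℝ, 0 < m ∧ m = ((Asymm.nnnorm : ℝ))⁻¹ :=
    ⟨_, inv_pos.2 hMpos, rfl⟩
  obtain ⟨c, hcpos, hceq⟩ : ∃ c : NNReal, 0 < (c:ℝ) ∧ (c:ℝ) = m / 2 :=
    ⟨(m / 2).toNNReal, by rw [Real.coe_toNNReal _ (by positivity)]; positivity,
      Real.coe_toNNReal _ (by positivity)⟩
  -- choose δ > 0 with ball ξ δ ⊆ U and ‖F' x − F' ξ‖ small there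
  obtain ⟨δ, hδpos, hballU, hF'near⟩ : ∃ δ : ℝ, 0 < δ ∧ Metric.ball ξ δ ⊆ U ∧
      ∀ x ∈ Metric.ball ξ δ, ‖F' x - F' ξ‖ ≤ (c:ℝ) / (‖e‖ + 1) := by
    have hcontat : ContinuousAt F' ξ := hF'cont.continuousAt (hU.mem_nhds hξU)
    have hcpos' : (0:ℝ) < (c:ℝ) / (‖e‖ + 1) := div_pos hcpos (by positivity)
    obtain ⟨δ₀, hδ₀pos, hδ₀⟩ := Metric.continuousAt_iff.1 hcontat _ hcpos'
    obtain ⟨δ₁, hδ₁pos, hδ₁⟩ := Metric.isOpen_iff.1 hU ξ hξU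
    refine ⟨min δ₀ δ₁, lt_min hδ₀pos hδ₁pos,
      fun x hx => hδ₁ (Metric.ball_subset_ball (min_le_right _ _) hx), fun x hx => ?_⟩
    have hx0 : dist x ξ < δ₀ := lt_of_lt_of_le hx (min_le_left _ _)
    have := hδ₀ hx0
    rw [dist_eq_norm] at this
    exact this.le
  -- Lipschitz bound for F on the ball
  have hLip : ∀ x ∈ Metric.ball ξ δ, ‖F x - F ξ‖ ≤ C' * ‖x - ξ‖ :=
    fun x hx => (convex_ball ξ δ).norm_image_sub_le_of_norm_hasFDerivWithin_le
      (fun y hy => (hF y (hballU hy)).hasFDerivWithinAt)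
      (fun y hy => hC' y (hballU hy)) (Metric.mem_ball_self hδpos) hx
  -- the key constants
  obtain ⟨Kc, hKcpos, hKc⟩ : ∃ Kc : ℝ, 0 < Kc ∧ Kc = C' / (c:ℝ) :=
    ⟨_, div_pos hC'pos hcpos, rfl⟩
  obtain ⟨B, hBpos, hB⟩ : ∃ B : ℝ, 0 < B ∧ B = ‖e‖ * Kc + 1 :=
    ⟨_, by positivity, rfl⟩
  obtain ⟨η, hηpos, hη⟩ : ∃ η : ℝ, 0 < η ∧ 2 * B * η = δ :=
    ⟨δ / (2 * B), by positivity, by field_simp⟩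
  have hB1 : 1 ≤ B := by rw [hB]; nlinarith [norm_nonneg (e : L →L[ℝ] K), hKcpos]
  have hηδ : η < δ := by nlinarith
  -- key step: from any `l` with `‖e l − ξ‖ < η` produce a solution nearby
  have key : ∀ l : L, ‖e l - ξ‖ < η → ∃ x : L, F (e x) = F ξ ∧ ‖e x - ξ‖ ≤ B * ‖e l - ξ‖ := by
    intro l hl
    have hd0 : (0:ℝ) ≤ ‖e l - ξ‖ := norm_nonneg _
    obtain ⟨r, hr0, hr⟩ : ∃ r : ℝ, 0 ≤ r ∧ r = Kc * ‖e l - ξ‖ :=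
      ⟨_, by positivity, rfl⟩
    -- the image of the closed ball is inside `ball ξ δ`
    have hest : ∀ x : L, x ∈ Metric.closedBall l r → ‖e x - ξ‖ ≤ B * ‖e l - ξ‖ := by
      intro x hx
      rw [Metric.mem_closedBall, dist_eq_norm] at hx
      have h1 : ‖e x - ξ‖ ≤ ‖e (x - l)‖ + ‖e l - ξ‖ := by
        have : e x - ξ = e (x - l) + (e l - ξ) := by rw [map_sub]; abel
        rw [this]; exact norm_add_le _ _
      have h2 : ‖e (x - l)‖ ≤ ‖e‖ * r := (e.le_opNorm _).trans
        (mul_le_mul_of_nonneg_left hx (norm_nonneg (e : L →L[ℝ] K)))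
      have h4 : ‖e‖ * (Kc * ‖e l - ξ‖) + ‖e l - ξ‖ = B * ‖e l - ξ‖ := by rw [hB]; ring
      rw [hr] at h2
      linarith
    have himg : ∀ x : L, x ∈ Metric.closedBall l r → e x ∈ Metric.ball ξ δ := by
      intro x hx
      rw [Metric.mem_ball, dist_eq_norm]
      have h5 : B * ‖e l - ξ‖ < B * η := mul_lt_mul_of_pos_left hl hBpos
      have := hest x hx
      nlinarith
    -- ApproximatesLinearOn for `g = F ∘ e` on the closed ball
    have happrox : ApproximatesLinearOn (fun v : L => F (e v)) ((F' ξ).comp e)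
        (Metric.closedBall l r) c := by
      intro x hx y hy
      have hderiv : ∀ v ∈ Metric.closedBall l r,
          HasFDerivWithinAt (fun v : L => F (e v)) ((F' (e v)).comp e)
            (Metric.closedBall l r) v := fun v hv =>
        ((hF (e v) (hballU (himg v hv))).comp v e.hasFDerivAt).hasFDerivWithinAt
      have hbound : ∀ v ∈ Metric.closedBall l r,
          ‖(F' (e v)).comp e - (F' ξ).comp e‖ ≤ (c:ℝ) := by
        intro v hv
        rw [← ContinuousLinearMap.sub_comp]
        calc ‖(F' (e v) - F' ξ).comp e‖ ≤ ‖F' (e v) - F' ξ‖ * ‖e‖ :=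
              ContinuousLinearMap.opNorm_comp_le _ _
          _ ≤ ((c:ℝ) / (‖e‖ + 1)) * ‖e‖ :=
              mul_le_mul_of_nonneg_right (hF'near _ (himg v hv)) (norm_nonneg _)
          _ ≤ (c:ℝ) := by
              rw [div_mul_eq_mul_div, div_le_iff₀ (by positivity : (0:ℝ) < ‖e‖ + 1)]
              nlinarith [norm_nonneg (e : L →L[ℝ] K)]
      have := (convex_closedBall l r).norm_image_sub_le_of_norm_hasFDerivWithin_le'
        hderiv hbound hy hx
      simpa [dist_eq_norm] using this
    -- surjectivity onto a closed ball around `F (e l)`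
    have hsurjon := happrox.surjOn_closedBall_of_nonlinearRightInverse Asymm hr0
      (le_refl (Metric.closedBall l r))
    -- `F ξ` lies in the target ball
    have hlball : e l ∈ Metric.ball ξ δ := by
      rw [Metric.mem_ball, dist_eq_norm]; exact lt_trans hl hηδ
    have htarget : F ξ ∈ Metric.closedBall (F (e l)) (((Asymm.nnnorm : ℝ)⁻¹ - c) * r) := by
      rw [Metric.mem_closedBall, dist_eq_norm]
      have h1 : ‖F ξ - F (e l)‖ ≤ C' * ‖e l - ξ‖ := by
        have h := hLip (e l) hlball
        rw [← norm_neg]; simpa [neg_sub] using h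
      have h2 : ((Asymm.nnnorm : ℝ)⁻¹ - c) * r = (m - (c:ℝ)) * (Kc * ‖e l - ξ‖) := by
        rw [hmdef, hr]
      have h3 : C' * ‖e l - ξ‖ ≤ (m - (c:ℝ)) * (Kc * ‖e l - ξ‖) := by
        have hKC : (m - (c:ℝ)) * Kc = C' + (m - 2*(c:ℝ)) * Kc := by
          rw [hKc]; field_simp; ring
        have hmc : m - 2*(c:ℝ) = 0 := by rw [hceq]; ring
        have : (m - (c:ℝ)) * Kc = C' := by rw [hKC, hmc]; ring
        nlinarith
      rw [h2]; linarith
    obtain ⟨x, hxball, hxeq⟩ := hsurjon htarget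
    exact ⟨x, hxeq, hest x hxball⟩
  -- construct the sequence
  have hchoice : ∀ j : ℕ, ∃ x : L, F (e x) = F ξ ∧ ‖e x - ξ‖ ≤ B * min η (1 / (j + 1)) := by
    intro j
    have hεpos : 0 < min η (1 / ((j:ℝ) + 1)) / 2 := by positivity
    obtain ⟨l, hl⟩ := he.exists_dist_lt ξ hεpos
    rw [dist_comm, dist_eq_norm] at hl
    have hmin1 : min η (1 / ((j:ℝ) + 1)) / 2 ≤ η := by
      have := min_le_left η (1 / ((j:ℝ) + 1)); linarith
    obtain ⟨x, hx1, hx2⟩ := key l (lt_of_lt_of_le hl hmin1)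
    refine ⟨x, hx1, hx2.trans ?_⟩
    apply mul_le_mul_of_nonneg_left _ hBpos.le
    have : min η (1 / ((j:ℝ) + 1)) / 2 ≤ min η (1 / ((j:ℝ) + 1)) := by linarith [hεpos]
    exact hl.le.trans this
  choose ξj hξj1 hξj2 using hchoice
  refine ⟨ξj, ?_, hξj1⟩
  have htend : Tendsto (fun j : ℕ => B * min η (1 / ((j:ℝ) + 1))) atTop (nhds 0) := by
    have h1 : Tendsto (fun j : ℕ => 1 / ((j:ℝ) + 1)) atTop (nhds 0) :=
      tendsto_one_div_add_atTop_nhds_zero_nat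
    have h2 : Tendsto (fun j : ℕ => min η (1 / ((j:ℝ) + 1))) atTop (nhds 0) :=
      squeeze_zero (fun j => le_min hηpos.le (by positivity)) (fun j => min_le_right _ _) h1
    simpa using h2.const_mul B
  exact squeeze_zero (fun j => norm_nonneg _) hξj2 htend
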